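/- The function (x,t) ↦ F(x,t) = min_{y ≥ 0} F(y,x,t) is locally Lipschitz continuous on [0,∞) × [0,∞), and the function (x,t) ↦ G(x,t) = min_{τ ≥ 0} G(τ,x,t) is locally Lipschitz continuous on [0,∞) × [0,∞). -/
import Mathlib

open MeasureTheory Set Filter

noncomputable def Fpot (ρ0 u0 : ℝ → ℝ) (y x t : ℝ) : ℝ :=
  ∫ η in (0:ℝ)..y, (t * u0 η + η - x) * ρ0 η

noncomputable def Gpot (ρb ub : ℝ → ℝ) (τ x t : ℝ) : ℝ :=
  ∫ η in (0:ℝ)..τ, (x - ub η * (t - η)) * (ρb η * ub η)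

/-- `a` minimizes `f` over `[0, ∞)`. -/
def MinimizesOn (f : ℝ → ℝ) (a : ℝ) : Prop :=
  0 ≤ a ∧ ∀ b, 0 ≤ b → f a ≤ f b

/-- `a` is the smallest minimizer of `f` over `[0, ∞)`. -/
def SmallestMinimizer (f : ℝ → ℝ) (a : ℝ) : Prop :=
  MinimizesOn f a ∧ ∀ b, MinimizesOn f b → a ≤ b

/-- `a` is the largest minimizer of `f` over `[0, ∞)`. -/
def LargestMinimizer (f : ℝ → ℝ) (a : ℝ) : Prop :=
  MinimizesOn f a ∧ ∀ b, MinimizesOn f b → b ≤ a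

/-- `v` is the (attained) minimum value of `f` over `[0, ∞)`. -/
def IsMinValue (f : ℝ → ℝ) (v : ℝ) : Prop :=
  (∃ a, 0 ≤ a ∧ f a = v) ∧ ∀ b, 0 ≤ b → v ≤ f b

lemma intInt_of_bdd {f : ℝ → ℝ} (hf : Measurable f) {a b C : ℝ}
    (h : ∀ η ∈ Set.uIoc a b, |f η| ≤ C) : IntervalIntegrable f volume a b := by
  rw [intervalIntegrable_iff]
  apply Measure.integrableOn_of_bounded
  · rw [Set.uIoc]; exact measure_Ioc_lt_top.ne
  · exact hf.aestronglyMeasurable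
  · exact (ae_restrict_iff' measurableSet_uIoc).2 (ae_of_all _ fun η hη => h η hη)

lemma mono_int {f : ℝ → ℝ} (hf : Measurable f) {B y C : ℝ} (hB : 0 ≤ B) (hBy : B ≤ y)
    (hbdd : ∀ η ∈ Set.Ioc (0:ℝ) y, |f η| ≤ C) (hnn : ∀ η ∈ Set.Icc B y, 0 ≤ f η) :
    ∫ η in (0:ℝ)..B, f η ≤ ∫ η in (0:ℝ)..y, f η := by
  have h1 : IntervalIntegrable f volume 0 B := by
    apply intInt_of_bdd hf
    intro η hη
    rw [Set.uIoc_of_le hB] at hη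
    exact hbdd η ⟨hη.1, hη.2.trans hBy⟩
  have h2 : IntervalIntegrable f volume B y := by
    apply intInt_of_bdd hf
    intro η hη
    rw [Set.uIoc_of_le hBy] at hη
    exact hbdd η ⟨lt_of_le_of_lt hB hη.1, hη.2⟩
  have h3 := intervalIntegral.integral_add_adjacent_intervals h1 h2
  have h4 : 0 ≤ ∫ η in B..y, f η :=
    intervalIntegral.integral_nonneg hBy (fun u hu => hnn u hu)
  linarith

lemma key_min_lip (P : ℝ → ℝ × ℝ → ℝ) (Fm : ℝ × ℝ → ℝ) (S : Set (ℝ × ℝ)) {B : ℝ}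
    (hB : 0 ≤ B) (K : NNReal)
    (hmin : ∀ q ∈ S, IsMinValue (fun y => P y q) (Fm q))
    (hmono : ∀ q ∈ S, ∀ y, B ≤ y → P B q ≤ P y q)
    (hlip : ∀ z ∈ Set.Icc (0:ℝ) B, ∀ q ∈ S, ∀ q' ∈ S,
      dist (P z q) (P z q') ≤ K * dist q q') :
    LipschitzOnWith K Fm S := by
  rw [lipschitzOnWith_iff_dist_le_mul]
  have key : ∀ a ∈ S, ∀ b ∈ S, Fm a ≤ Fm b + K * dist a b := by
    intro a ha b hb
    obtain ⟨⟨y', hy', hPy'⟩, _⟩ := hmin b hb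
    set z := min y' B with hzdef
    have hz0 : 0 ≤ z := le_min hy' hB
    have hzB : z ∈ Set.Icc (0:ℝ) B := ⟨hz0, min_le_right _ _⟩
    have h1 : Fm a ≤ P z a := (hmin a ha).2 z hz0
    have h2 : P z a - P z b ≤ K * dist a b := by
      have hd := hlip z hzB a ha b hb
      rw [Real.dist_eq] at hd
      exact le_trans (le_abs_self _) hd
    have h3 : P z b ≤ Fm b := by
      rcases le_or_gt y' B with h | h
      · have : z = y' := min_eq_left h
        rw [this, ← hPy']
      · have hz : z = B := min_eq_right h.le
        rw [hz, ← hPy']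
        exact hmono b hb y' h.le
    linarith
  intro q hq q' hq'
  rw [Real.dist_eq, abs_sub_le_iff]
  constructor
  · have := key q hq q' hq'; linarith
  · have := key q' hq' q hq; rw [dist_comm] at this; linarith

set_option maxHeartbeats 1000000 in
theorem stmt6
    (ρ0 u0 ρb ub : ℝ → ℝ)
    (hρ0meas : Measurable ρ0) (hu0meas : Measurable u0)
    (hρbmeas : Measurable ρb) (hubmeas : Measurable ub)
    (hρ0pos : ∀ η, 0 ≤ η → 0 < ρ0 η)
    (hρbpos : ∀ η, 0 ≤ η → 0 < ρb η)
    (hubpos : ∀ η, 0 ≤ η → 0 < ub η)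
    (hρ0loc : ∀ K : ℝ, ∃ M : ℝ, ∀ η ∈ Set.Icc (0:ℝ) K, ρ0 η ≤ M)
    (hρbloc : ∀ K : ℝ, ∃ M : ℝ, ∀ η ∈ Set.Icc (0:ℝ) K, ρb η ≤ M)
    (hu0bdd : ∃ M : ℝ, ∀ η, 0 ≤ η → |u0 η| ≤ M)
    (hubbdd : ∃ M : ℝ, ∀ η, 0 ≤ η → |ub η| ≤ M)
    (Fm Gm : ℝ → ℝ → ℝ)
    (hFm : ∀ x t, 0 ≤ x → 0 ≤ t → IsMinValue (fun y => Fpot ρ0 u0 y x t) (Fm x t))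
    (hGm : ∀ x t, 0 ≤ x → 0 ≤ t → IsMinValue (fun τ => Gpot ρb ub τ x t) (Gm x t))
 :
    (∀ p ∈ Set.Ici (0:ℝ) ×ˢ Set.Ici (0:ℝ), ∃ ε > (0:ℝ), ∃ K : NNReal,
      LipschitzOnWith K (fun q : ℝ × ℝ => Fm q.1 q.2)
        ((Set.Ici (0:ℝ) ×ˢ Set.Ici (0:ℝ)) ∩ Metric.ball p ε)) ∧
    (∀ p ∈ Set.Ici (0:ℝ) ×ˢ Set.Ici (0:ℝ), ∃ ε > (0:ℝ), ∃ K : NNReal,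
      LipschitzOnWith K (fun q : ℝ × ℝ => Gm q.1 q.2)
        ((Set.Ici (0:ℝ) ×ˢ Set.Ici (0:ℝ)) ∩ Metric.ball p ε)) := by
  constructor
  · -- F part
    intro p hp
    have hx0 : (0:ℝ) ≤ p.1 := hp.1
    have ht0 : (0:ℝ) ≤ p.2 := hp.2
    obtain ⟨M0, hM0⟩ := hu0bdd
    set M := max M0 0 with hMdef
    have hM : ∀ η, 0 ≤ η → |u0 η| ≤ M := fun η hη => (hM0 η hη).trans (le_max_left _ _)
    have hMnn : (0:ℝ) ≤ M := le_max_right _ _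
    set B := p.1 + 1 + (p.2 + 1) * M with hBdef
    have hB : (0:ℝ) ≤ B := by
      have : 0 ≤ (p.2 + 1) * M := mul_nonneg (by linarith) hMnn
      simp only [hBdef]; linarith
    obtain ⟨Mρ0, hMρ0⟩ := hρ0loc B
    set Mρ := max Mρ0 0 with hMρdef
    have hMρ : ∀ η ∈ Set.Icc (0:ℝ) B, ρ0 η ≤ Mρ := fun η hη => (hMρ0 η hη).trans (le_max_left _ _)
    have hMρnn : (0:ℝ) ≤ Mρ := le_max_right _ _
    refine ⟨1, one_pos, ((M + 1) * Mρ * B).toNNReal, ?_⟩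
    apply key_min_lip (fun y q => Fpot ρ0 u0 y q.1 q.2) _ _ hB
    · intro q hq
      exact hFm q.1 q.2 hq.1.1 hq.1.2
    · -- monotonicity beyond B
      rintro ⟨x, t⟩ ⟨⟨hx, ht⟩, hball⟩ y hBy
      simp only [Set.mem_Ici] at hx ht
      rw [Metric.mem_ball, Prod.dist_eq, max_lt_iff, Real.dist_eq, Real.dist_eq] at hball
      have hxq : x < p.1 + 1 := by have := abs_lt.mp hball.1; linarith [this.1]
      have htq : t < p.2 + 1 := by have := abs_lt.mp hball.2; linarith [(abs_lt.mp hball.2).1]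
      show Fpot ρ0 u0 B x t ≤ Fpot ρ0 u0 y x t
      unfold Fpot
      obtain ⟨Mρy0, hMρy0⟩ := hρ0loc y
      set Mρy := max Mρy0 0 with hMρydef
      have hMρy : ∀ η ∈ Set.Icc (0:ℝ) y, ρ0 η ≤ Mρy :=
        fun η hη => (hMρy0 η hη).trans (le_max_left _ _)
      apply mono_int (C := (t * M + y + x) * Mρy) ?_ hB hBy
      · intro η hη
        have hη0 : 0 ≤ η := hη.1.le
        have hρnn := (hρ0pos η hη0).le
        have hρle := hMρy η ⟨hη0, hη.2⟩
        have hu := abs_le.mp (hM η hη0)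
        have h1 : |t * u0 η + η - x| ≤ t * M + y + x := by
          rw [abs_le]
          constructor <;> nlinarith [hη.2, hη.1]
        rw [abs_mul, abs_of_nonneg hρnn]
        have h2 : 0 ≤ t * M + y + x := by nlinarith [hη.1, hη.2]
        exact mul_le_mul h1 hρle hρnn h2
      · intro η hη
        have hη0 : 0 ≤ η := hB.trans hη.1
        apply mul_nonneg _ (hρ0pos η hη0).le
        have hu := (abs_le.mp (hM η hη0)).1
        have hxb : x + t * M ≤ B := by
          simp only [hBdef]
          nlinarith
        nlinarith [hη.1]
      · exact ((measurable_const.mul hu0meas).add measurable_id |>.sub measurable_const).mul hρ0meas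
    · -- Lipschitz bound on [0, B]
      intro z hz q hq q' hq'
      set d := dist q q' with hddef
      have hdnn : (0:ℝ) ≤ d := dist_nonneg
      have hdx : |q.1 - q'.1| ≤ d := by
        rw [hddef, Prod.dist_eq, ← Real.dist_eq]; exact le_max_left _ _
      have hdt : |q.2 - q'.2| ≤ d := by
        rw [hddef, Prod.dist_eq, ← Real.dist_eq]; exact le_max_right _ _
      have hmeas : ∀ a b : ℝ, Measurable (fun η => (b * u0 η + η - a) * ρ0 η) := fun a b =>
        ((measurable_const.mul hu0meas).add measurable_id |>.sub measurable_const).mul hρ0meas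
      have hCbd : ∀ a b : ℝ, |b| ≤ (max |q.2| |q'.2|) → True := fun _ _ _ => trivial
      have hint : ∀ a b : ℝ, IntervalIntegrable (fun η => (b * u0 η + η - a) * ρ0 η) volume 0 z := by
        intro a b
        apply intInt_of_bdd (hmeas a b) (C := (|b| * M + B + |a|) * Mρ)
        intro η hη
        rw [Set.uIoc_of_le hz.1] at hη
        have hη0 : 0 ≤ η := hη.1.le
        have hηB : η ≤ B := hη.2.trans hz.2
        have hρnn := (hρ0pos η hη0).le
        have hρle := hMρ η ⟨hη0, hηB⟩
        have hu := abs_le.mp (hM η hη0)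
        have habs := abs_le.mp (le_refl |b|)
        rw [abs_mul, abs_of_nonneg hρnn]
        have h1 : |b * u0 η + η - a| ≤ |b| * M + B + |a| := by
          rw [abs_le]
          have hb1 := abs_le.mp (le_refl |b|)
          have := abs_mul b (u0 η)
          have hbnn : 0 ≤ |b| := abs_nonneg b
          have h2 : |b * u0 η| ≤ |b| * M := by
            rw [abs_mul]; exact mul_le_mul_of_nonneg_left (hM η hη0) hbnn
          have h3 := abs_le.mp h2
          have h4 := abs_le.mp (le_refl |a|)
          constructor <;> [nlinarith [neg_abs_le a, le_abs_self a]; nlinarith [neg_abs_le a, le_abs_self a]]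
        exact mul_le_mul h1 hρle hρnn (by positivity)
      have hsub := intervalIntegral.integral_sub (hint q.1 q.2) (hint q'.1 q'.2)
      have heq : Fpot ρ0 u0 z q.1 q.2 - Fpot ρ0 u0 z q'.1 q'.2
          = ∫ η in (0:ℝ)..z, ((q.2 * u0 η + η - q.1) * ρ0 η - (q'.2 * u0 η + η - q'.1) * ρ0 η) := by
        rw [hsub]; rfl
      have hbound : |∫ η in (0:ℝ)..z,
          ((q.2 * u0 η + η - q.1) * ρ0 η - (q'.2 * u0 η + η - q'.1) * ρ0 η)|
          ≤ ((M + 1) * Mρ * d) * |z - 0| := by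
        have := intervalIntegral.norm_integral_le_of_norm_le_const
          (C := (M + 1) * Mρ * d)
          (f := fun η => (q.2 * u0 η + η - q.1) * ρ0 η - (q'.2 * u0 η + η - q'.1) * ρ0 η)
          (a := (0:ℝ)) (b := z) ?_
        · simpa [Real.norm_eq_abs] using this
        · intro η hη
          rw [Set.uIoc_of_le hz.1] at hη
          have hη0 : 0 ≤ η := hη.1.le
          have hηB : η ≤ B := hη.2.trans hz.2
          have hρnn := (hρ0pos η hη0).le
          have hρle := hMρ η ⟨hη0, hηB⟩
          have hueq : (q.2 * u0 η + η - q.1) * ρ0 η - (q'.2 * u0 η + η - q'.1) * ρ0 η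
              = ((q.2 - q'.2) * u0 η + (q'.1 - q.1)) * ρ0 η := by ring
          beta_reduce
          rw [Real.norm_eq_abs, hueq, abs_mul, abs_of_nonneg hρnn]
          have h1 : |(q.2 - q'.2) * u0 η + (q'.1 - q.1)| ≤ M * d + d := by
            have h2 : |(q.2 - q'.2) * u0 η| ≤ d * M := by
              rw [abs_mul]
              exact mul_le_mul hdt (hM η hη0) (abs_nonneg _) hdnn
            have h3 := abs_le.mp h2
            have h4 : |q'.1 - q.1| ≤ d := by rw [abs_sub_comm]; exact hdx
            have h5 := abs_le.mp h4
            rw [abs_le]; constructor <;> nlinarith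
          calc |(q.2 - q'.2) * u0 η + (q'.1 - q.1)| * ρ0 η
              ≤ (M * d + d) * Mρ := by
                apply mul_le_mul h1 hρle hρnn (by nlinarith)
            _ = (M + 1) * Mρ * d := by ring
      have hK : (((M + 1) * Mρ * B).toNNReal : ℝ) = (M + 1) * Mρ * B :=
        Real.coe_toNNReal _ (by positivity)
      rw [Real.dist_eq, heq]
      calc |∫ η in (0:ℝ)..z,
            ((q.2 * u0 η + η - q.1) * ρ0 η - (q'.2 * u0 η + η - q'.1) * ρ0 η)|
          ≤ ((M + 1) * Mρ * d) * |z - 0| := hbound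
        _ ≤ (M + 1) * Mρ * B * d := by
            rw [sub_zero, abs_of_nonneg hz.1]
            have h9 : (M + 1) * Mρ * d * z ≤ (M + 1) * Mρ * d * B :=
              mul_le_mul_of_nonneg_left hz.2 (by positivity)
            linarith [h9, show (M + 1) * Mρ * d * B = (M + 1) * Mρ * B * d from by ring]
        _ = (((M + 1) * Mρ * B).toNNReal : ℝ) * d := by rw [hK]
  · -- G part
    intro p hp
    have hx0 : (0:ℝ) ≤ p.1 := hp.1
    have ht0 : (0:ℝ) ≤ p.2 := hp.2
    obtain ⟨MU0, hMU0⟩ := hubbdd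
    set MU := max MU0 0 with hMUdef
    have hMU : ∀ η, 0 ≤ η → |ub η| ≤ MU := fun η hη => (hMU0 η hη).trans (le_max_left _ _)
    have hMUnn : (0:ℝ) ≤ MU := le_max_right _ _
    set B := p.2 + 1 with hBdef
    have hB : (0:ℝ) ≤ B := by simp only [hBdef]; linarith
    obtain ⟨Mρ0, hMρ0⟩ := hρbloc B
    set Mρ := max Mρ0 0 with hMρdef
    have hMρ : ∀ η ∈ Set.Icc (0:ℝ) B, ρb η ≤ Mρ := fun η hη => (hMρ0 η hη).trans (le_max_left _ _)
    have hMρnn : (0:ℝ) ≤ Mρ := le_max_right _ _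
    refine ⟨1, one_pos, ((1 + MU) * Mρ * MU * B).toNNReal, ?_⟩
    apply key_min_lip (fun τ q => Gpot ρb ub τ q.1 q.2) _ _ hB
    · intro q hq
      exact hGm q.1 q.2 hq.1.1 hq.1.2
    · -- monotonicity beyond B
      rintro ⟨x, t⟩ ⟨⟨hx, ht⟩, hball⟩ y hBy
      simp only [Set.mem_Ici] at hx ht
      rw [Metric.mem_ball, Prod.dist_eq, max_lt_iff, Real.dist_eq, Real.dist_eq] at hball
      have htq : t < p.2 + 1 := by have := abs_lt.mp hball.2; linarith [this.1]
      show Gpot ρb ub B x t ≤ Gpot ρb ub y x t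
      unfold Gpot
      obtain ⟨Mρy0, hMρy0⟩ := hρbloc y
      set Mρy := max Mρy0 0 with hMρydef
      have hMρy : ∀ η ∈ Set.Icc (0:ℝ) y, ρb η ≤ Mρy :=
        fun η hη => (hMρy0 η hη).trans (le_max_left _ _)
      apply mono_int (C := (x + MU * (t + y)) * (Mρy * MU)) ?_ hB hBy
      · intro η hη
        have hη0 : 0 ≤ η := hη.1.le
        have hρnn := (hρbpos η hη0).le
        have hρle := hMρy η ⟨hη0, hη.2⟩
        have hupos := hubpos η hη0
        have hub := abs_le.mp (hMU η hη0)
        have hy0 : (0:ℝ) ≤ y := hB.trans hBy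
        have hMρynn : (0:ℝ) ≤ Mρy := le_max_right _ _
        rw [abs_mul]
        have hprd : |ρb η * ub η| ≤ Mρy * MU := by
          rw [abs_mul, abs_of_nonneg hρnn, abs_of_pos hupos]
          exact mul_le_mul hρle hub.2 hupos.le hMρynn
        have h1 : |x - ub η * (t - η)| ≤ x + MU * (t + y) := by
          have h2 : |ub η * (t - η)| ≤ MU * (t + y) := by
            rw [abs_mul]
            apply mul_le_mul (hMU η hη0) _ (abs_nonneg _) hMUnn
            rw [abs_le]
            constructor <;> nlinarith [hη.1, hη.2]
          have h3 := abs_le.mp h2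
          rw [abs_le]
          constructor <;> linarith
        apply mul_le_mul h1 hprd (abs_nonneg _)
        nlinarith [mul_nonneg hMUnn (by linarith : (0:ℝ) ≤ t + y)]
      · intro η hη
        have hη0 : 0 ≤ η := hB.trans hη.1
        have hupos := hubpos η hη0
        apply mul_nonneg
        · have htη : t - η ≤ 0 := by linarith [hη.1, htq]
          nlinarith [mul_nonpos_of_nonneg_of_nonpos hupos.le htη]
        · exact mul_nonneg (hρbpos η hη0).le hupos.le
      · exact (measurable_const.sub (hubmeas.mul (measurable_const.sub measurable_id))).mul
          (hρbmeas.mul hubmeas)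
    · -- Lipschitz bound on [0, B]
      intro z hz q hq q' hq'
      set d := dist q q' with hddef
      have hdnn : (0:ℝ) ≤ d := dist_nonneg
      have hdx : |q.1 - q'.1| ≤ d := by
        rw [hddef, Prod.dist_eq, ← Real.dist_eq]; exact le_max_left _ _
      have hdt : |q.2 - q'.2| ≤ d := by
        rw [hddef, Prod.dist_eq, ← Real.dist_eq]; exact le_max_right _ _
      have hmeas : ∀ a b : ℝ, Measurable (fun η => (a - ub η * (b - η)) * (ρb η * ub η)) :=
        fun a b => (measurable_const.sub (hubmeas.mul (measurable_const.sub measurable_id))).mul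
          (hρbmeas.mul hubmeas)
      have hint : ∀ a b : ℝ,
          IntervalIntegrable (fun η => (a - ub η * (b - η)) * (ρb η * ub η)) volume 0 z := by
        intro a b
        apply intInt_of_bdd (hmeas a b) (C := (|a| + MU * (|b| + B)) * (Mρ * MU))
        intro η hη
        rw [Set.uIoc_of_le hz.1] at hη
        have hη0 : 0 ≤ η := hη.1.le
        have hηB : η ≤ B := hη.2.trans hz.2
        have hρnn := (hρbpos η hη0).le
        have hρle := hMρ η ⟨hη0, hηB⟩
        have hupos := hubpos η hη0
        have hub := abs_le.mp (hMU η hη0)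
        rw [abs_mul]
        have hprd : |ρb η * ub η| ≤ Mρ * MU := by
          rw [abs_mul, abs_of_nonneg hρnn, abs_of_pos hupos]
          exact mul_le_mul hρle hub.2 hupos.le hMρnn
        have h1 : |a - ub η * (b - η)| ≤ |a| + MU * (|b| + B) := by
          have h2 : |ub η * (b - η)| ≤ MU * (|b| + B) := by
            rw [abs_mul]
            apply mul_le_mul (hMU η hη0) _ (abs_nonneg _) hMUnn
            have h4 : |b - η| ≤ |b| + |η| := abs_sub b η
            rw [abs_of_nonneg hη0] at h4
            linarith
          have h6 := abs_le.mp h2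
          have h7 := abs_le.mp (le_refl |a|)
          rw [abs_le]
          constructor <;> nlinarith [neg_abs_le a, le_abs_self a]
        exact mul_le_mul h1 hprd (abs_nonneg _) (by positivity)
      have hsub := intervalIntegral.integral_sub (hint q.1 q.2) (hint q'.1 q'.2)
      have heq : Gpot ρb ub z q.1 q.2 - Gpot ρb ub z q'.1 q'.2
          = ∫ η in (0:ℝ)..z, ((q.1 - ub η * (q.2 - η)) * (ρb η * ub η)
            - (q'.1 - ub η * (q'.2 - η)) * (ρb η * ub η)) := by
        rw [hsub]; rfl
      have hbound : |∫ η in (0:ℝ)..z, ((q.1 - ub η * (q.2 - η)) * (ρb η * ub η)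
            - (q'.1 - ub η * (q'.2 - η)) * (ρb η * ub η))|
          ≤ ((1 + MU) * Mρ * MU * d) * |z - 0| := by
        have := intervalIntegral.norm_integral_le_of_norm_le_const
          (C := (1 + MU) * Mρ * MU * d)
          (f := fun η => (q.1 - ub η * (q.2 - η)) * (ρb η * ub η)
            - (q'.1 - ub η * (q'.2 - η)) * (ρb η * ub η))
          (a := (0:ℝ)) (b := z) ?_
        · simpa [Real.norm_eq_abs] using this
        · intro η hη
          rw [Set.uIoc_of_le hz.1] at hη
          have hη0 : 0 ≤ η := hη.1.le
          have hηB : η ≤ B := hη.2.trans hz.2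
          have hρnn := (hρbpos η hη0).le
          have hρle := hMρ η ⟨hη0, hηB⟩
          have hupos := hubpos η hη0
          have hub := abs_le.mp (hMU η hη0)
          have hueq : (q.1 - ub η * (q.2 - η)) * (ρb η * ub η)
              - (q'.1 - ub η * (q'.2 - η)) * (ρb η * ub η)
              = ((q.1 - q'.1) - ub η * (q.2 - q'.2)) * (ρb η * ub η) := by ring
          beta_reduce
          rw [Real.norm_eq_abs, hueq, abs_mul]
          have hprd : |ρb η * ub η| ≤ Mρ * MU := by
            rw [abs_mul, abs_of_nonneg hρnn, abs_of_pos hupos]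
            exact mul_le_mul hρle hub.2 hupos.le hMρnn
          have h1 : |(q.1 - q'.1) - ub η * (q.2 - q'.2)| ≤ (1 + MU) * d := by
            have h2 : |ub η * (q.2 - q'.2)| ≤ MU * d := by
              rw [abs_mul]
              exact mul_le_mul (hMU η hη0) hdt (abs_nonneg _) hMUnn
            have h3 := abs_le.mp h2
            have h4 := abs_le.mp hdx
            rw [abs_le]; constructor <;> nlinarith
          calc |(q.1 - q'.1) - ub η * (q.2 - q'.2)| * |ρb η * ub η|
              ≤ ((1 + MU) * d) * (Mρ * MU) := by
                apply mul_le_mul h1 hprd (abs_nonneg _) (by positivity)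
            _ = (1 + MU) * Mρ * MU * d := by ring
      have hK : (((1 + MU) * Mρ * MU * B).toNNReal : ℝ) = (1 + MU) * Mρ * MU * B :=
        Real.coe_toNNReal _ (by positivity)
      rw [Real.dist_eq, heq]
      calc |∫ η in (0:ℝ)..z, ((q.1 - ub η * (q.2 - η)) * (ρb η * ub η)
            - (q'.1 - ub η * (q'.2 - η)) * (ρb η * ub η))|
          ≤ ((1 + MU) * Mρ * MU * d) * |z - 0| := hbound
        _ ≤ (1 + MU) * Mρ * MU * B * d := by
            rw [sub_zero, abs_of_nonneg hz.1]
            have h9 : (1 + MU) * Mρ * MU * d * z ≤ (1 + MU) * Mρ * MU * d * B :=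
              mul_le_mul_of_nonneg_left hz.2 (by positivity)
            linarith [h9, show (1 + MU) * Mρ * MU * d * B = (1 + MU) * Mρ * MU * B * d from by ring]
        _ = (((1 + MU) * Mρ * MU * B).toNNReal : ℝ) * d := by rw [hK]
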